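/- Let a, b be elements of an associative unital algebra A with ab − ba = s·b for some scalar s. Then r = a⊗b − b⊗a satisfies the classical Yang–Baxter equation: [r^{12},r^{13}] + [r^{12},r^{23}] + [r^{13},r^{23}] = 0 in A⊗A⊗A. -/

import Mathlib

open TensorProduct

/-- If `a b : A` satisfy `a*b - b*a = s • b`, then `r = a ⊗ b - b ⊗ a` satisfies
the classical Yang–Baxter equation in `A ⊗ A ⊗ A`. -/
theorem rank_two_solvable_r_satisfies_cybe
    (A : Type*) [Ring A] [Algebra ℝ A]
    (a b : A) (s : ℝ) (hab : a * b - b * a = s • b)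
    (e12 e13 e23 : A ⊗[ℝ] A →ₗ[ℝ] A ⊗[ℝ] (A ⊗[ℝ] A))
    (he12 : ∀ x y : A, e12 (x ⊗ₜ y) = x ⊗ₜ (y ⊗ₜ (1 : A)))
    (he13 : ∀ x y : A, e13 (x ⊗ₜ y) = x ⊗ₜ ((1 : A) ⊗ₜ y))
    (he23 : ∀ x y : A, e23 (x ⊗ₜ y) = (1 : A) ⊗ₜ (x ⊗ₜ y))
    (r : A ⊗[ℝ] A) (hr : r = a ⊗ₜ b - b ⊗ₜ a) :
    (e12 r * e13 r - e13 r * e12 r) + (e12 r * e23 r - e23 r * e12 r)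
      + (e13 r * e23 r - e23 r * e13 r) = 0 := by
  have hab' : a * b = b * a + s • b := by linear_combination (norm := module) hab
  subst hr
  simp only [map_sub, he12, he13, he23, sub_mul, mul_sub,
    Algebra.TensorProduct.tmul_mul_tmul, one_mul, mul_one, hab',
    add_mul, mul_add, tmul_add, add_tmul, tmul_smul, ← smul_tmul', smul_sub, smul_add]
  abel
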